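/- arXiv:1611.00562 — 2 statements merged into one kernel-verified Lean document; each statement's English description precedes it below -/
import Mathlib

section
/- Let (V,X,d) be a continuity space. The topology generated by (V,X,d) is regular (every closed set C and point x ∉ C have disjoint open neighbourhoods) if and only if for every x ∈ X and every set C ⊆ X closed in the generated topology, ⨆_{R : X → V_≺} d(x, B_R(C)) = ⊥ implies d(x,C) = ⊥, where B_R(C) = ⋃_{c ∈ C} B_{R(c)}(c) and the supremum is taken over all functions R from X to V_≺. -/
/-- `y` is well above `x` (written `y ≻ x`): for every `S` with `⨅ S ≤ x`
there is `s ∈ S` with `s ≤ y`. -/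
def WellAbove {V : Type*} [CompleteLattice V] (y x : V) : Prop :=
  ∀ S : Set V, sInf S ≤ x → ∃ s ∈ S, s ≤ y

theorem WellAbove.mono {V : Type*} [CompleteLattice V] {a b x : V}
    (h : WellAbove a x) (hab : a ≤ b) : WellAbove b x := by
  intro S hS
  obtain ⟨s, hs, hsa⟩ := h S hS
  exact ⟨s, hs, hsa.trans hab⟩

/-- A complete lattice `V` together with an addition `add` is a value quantale if it is
completely distributive (expressed via Raney's characterization `y = ⨅ {a | a ≻ y}`),
the set `{a | a ≻ ⊥}` is a filter (nonempty, upward closed, closed under binary meets),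
and `add` is associative, commutative, has `⊥` as neutral element and distributes over
arbitrary infima. -/
structure IsValueQuantale (V : Type*) [CompleteLattice V] (add : V → V → V) : Prop where
  raney : ∀ y : V, y = sInf {a | WellAbove a y}
  wellAbove_bot_nonempty : ∃ a : V, WellAbove a ⊥
  wellAbove_bot_upward : ∀ a b : V, WellAbove a ⊥ → a ≤ b → WellAbove b ⊥
  wellAbove_bot_inf : ∀ a b : V, WellAbove a ⊥ → WellAbove b ⊥ → WellAbove (a ⊓ b) ⊥
  add_assoc : ∀ a b c : V, add (add a b) c = add a (add b c)
  add_comm : ∀ a b : V, add a b = add b a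
  add_bot : ∀ a : V, add a ⊥ = a
  add_sInf : ∀ (a : V) (S : Set V), add a (sInf S) = ⨅ s ∈ S, add a s

/-- A value quantale, bundled as a class. -/
class ValueQuantale (V : Type*) extends CompleteLattice V, Add V where
  isVQ : IsValueQuantale V (· + ·)

/-- `d : X → X → V` is a `V`-space distance (w.r.t. the addition `add`). -/
structure IsVSpaceOn {V : Type*} [CompleteLattice V] (add : V → V → V)
    {X : Type*} (d : X → X → V) : Prop where
  refl : ∀ x, d x x = ⊥
  triangle : ∀ x y z, d x z ≤ add (d x y) (d y z)

/-- The open ball of radius `ε` about `x`: all `y` with `d x y ≺ ε`. -/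
def ball {V X : Type*} [CompleteLattice V] (d : X → X → V) (ε : V) (x : X) : Set X :=
  {y | WellAbove ε (d x y)}

/-- `U` is open for the topology generated by a continuity space. -/
def GenOpen {V X : Type*} [CompleteLattice V] (d : X → X → V) (U : Set X) : Prop :=
  ∀ x ∈ U, ∃ ε : V, WellAbove ε ⊥ ∧ ball d ε x ⊆ U

/-- The topology generated by a continuity space `(V, X, d)`. -/
def genTop {V X : Type*} [ValueQuantale V] (d : X → X → V) : TopologicalSpace X where
  IsOpen := GenOpen d
  isOpen_univ := fun _x _ => by
    obtain ⟨ε, hε⟩ := (ValueQuantale.isVQ (V := V)).wellAbove_bot_nonempty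
    exact ⟨ε, hε, Set.subset_univ _⟩
  isOpen_inter := fun U₁ U₂ h₁ h₂ x hx => by
    obtain ⟨ε₁, hε₁, hb₁⟩ := h₁ x hx.1
    obtain ⟨ε₂, hε₂, hb₂⟩ := h₂ x hx.2
    exact ⟨ε₁ ⊓ ε₂, (ValueQuantale.isVQ (V := V)).wellAbove_bot_inf _ _ hε₁ hε₂,
      fun y hy => ⟨hb₁ (WellAbove.mono hy inf_le_left), hb₂ (WellAbove.mono hy inf_le_right)⟩⟩
  isOpen_sUnion := fun S hS x hx => by
    obtain ⟨U, hU, hxU⟩ := hx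
    obtain ⟨ε, hε, hb⟩ := hS U hU x hxU
    exact ⟨ε, hε, hb.trans (Set.subset_sUnion_of_mem hU)⟩

/-- `Ω S`: the downward-closed families of finite subsets of `S`,
ordered by reverse inclusion. -/
abbrev Omega (S : Type*) := (LowerSet (Finset S))ᵒᵈ

/-- The underlying family of finite subsets of an element of `Ω S`. -/
def Omega.carrier {S : Type*} (A : Omega S) : Set (Finset S) :=
  ((OrderDual.ofDual A : LowerSet (Finset S)) : Set (Finset S))

/-- Construct an element of `Ω S` from a downward-closed family of finite subsets. -/
def Omega.mk {S : Type*} (A : Set (Finset S)) (h : IsLowerSet A) : Omega S :=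
  OrderDual.toDual ⟨A, h⟩

/-- Addition on `Ω S`: intersection of the families. -/
def omegaAdd {S : Type*} (A B : Omega S) : Omega S :=
  Omega.mk (Omega.carrier A ∩ Omega.carrier B)
    ((OrderDual.ofDual A : LowerSet (Finset S)).lower.inter
      (OrderDual.ofDual B : LowerSet (Finset S)).lower)

section Aux

variable {V : Type*} [CompleteLattice V]

theorem WellAbove.anti {a x y : V} (h : WellAbove a x) (hyx : y ≤ x) : WellAbove a y :=
  fun S hS => h S (hS.trans hyx)

theorem WellAbove.le {a x : V} (h : WellAbove a x) : x ≤ a := by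
  obtain ⟨s, hs, hsa⟩ := h {x} (by simp)
  simpa [Set.mem_singleton_iff.1 hs] using hsa

/-- Interpolation for the well-above relation, from Raney's condition. -/
theorem wellAbove_interpolate (hR : ∀ y : V, y = sInf {a | WellAbove a y})
    {a b : V} (h : WellAbove a b) : ∃ c, WellAbove a c ∧ WellAbove c b := by
  set T : Set V := {c | ∃ e, WellAbove c e ∧ WellAbove e b} with hT
  have hTb : sInf T ≤ b := by
    rw [hR b]
    refine le_sInf fun e he => ?_
    have : sInf {c | WellAbove c e} = e := (hR e).symm
    calc sInf T ≤ sInf {c | WellAbove c e} :=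
          sInf_le_sInf (fun c hc => ⟨e, hc, he⟩)
      _ = e := this
  obtain ⟨c, hc, hca⟩ := h T hTb
  obtain ⟨e, hce, heb⟩ := hc
  exact ⟨e, hce.mono hca, heb⟩

variable {W : Type*} [ValueQuantale W]

theorem VQ_add_mono {a b c : W} (h : b ≤ c) : a + b ≤ a + c := by
  have h1 := (ValueQuantale.isVQ (V := W)).add_sInf a {b, c}
  rw [sInf_pair, inf_eq_left.2 h] at h1
  rw [h1]
  exact iInf₂_le c (by simp)

theorem VQ_exists_add_le {ε p : W} (h : WellAbove ε p) :
    ∃ δ : W, WellAbove δ ⊥ ∧ p + δ ≤ ε := by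
  have hbot : sInf {δ : W | WellAbove δ ⊥} = ⊥ :=
    ((ValueQuantale.isVQ (V := W)).raney ⊥).symm
  have key : sInf ((fun δ => p + δ) '' {δ : W | WellAbove δ ⊥}) = p := by
    rw [sInf_image, ← (ValueQuantale.isVQ (V := W)).add_sInf, hbot,
      (ValueQuantale.isVQ (V := W)).add_bot]
  obtain ⟨s, hs, hsε⟩ := h _ key.le
  obtain ⟨δ, hδ, rfl⟩ := hs
  exact ⟨δ, hδ, hsε⟩

theorem VQ_ball_open {X : Type*} (d : X → X → W)
    (hd : IsVSpaceOn (· + · : W → W → W) d) (ε : W) (x : X) :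
    GenOpen d (ball d ε x) := by
  intro y hy
  obtain ⟨ε', hεε', hε'⟩ :=
    wellAbove_interpolate (ValueQuantale.isVQ (V := W)).raney hy
  obtain ⟨δ, hδ, hle⟩ := VQ_exists_add_le hε'
  refine ⟨δ, hδ, fun z hz => ?_⟩
  have hxz : d x z ≤ ε' := by
    calc d x z ≤ d x y + d y z := hd.triangle x y z
      _ ≤ d x y + δ := VQ_add_mono hz.le
      _ ≤ ε' := hle
  exact hεε'.anti hxz

theorem VQ_mem_ball_self {X : Type*} (d : X → X → W)
    (hd : IsVSpaceOn (· + · : W → W → W) d) {ε : W} (hε : WellAbove ε ⊥) (x : X) :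
    x ∈ ball d ε x := by
  show WellAbove ε (d x x)
  rw [hd.refl]
  exact hε

/-- If `d(x,S) = ⊥` then every generated-open set containing `x` meets `S`. -/
theorem VQ_open_meets {X : Type*} (d : X → X → W) {S U : Set X} {x : X}
    (h : (⨅ y ∈ S, d x y) = ⊥) (hU : GenOpen d U) (hx : x ∈ U) :
    ∃ y ∈ S, y ∈ U := by
  obtain ⟨ε, hε, hball⟩ := hU x hx
  obtain ⟨δ, hεδ, hδ⟩ :=
    wellAbove_interpolate (ValueQuantale.isVQ (V := W)).raney hε
  have hinf : sInf ((fun y => d x y) '' S) ≤ ⊥ := by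
    rw [sInf_image, h]
  obtain ⟨s, hs, hsδ⟩ := hδ _ hinf
  obtain ⟨y, hyS, rfl⟩ := hs
  exact ⟨y, hyS, hball (hεδ.anti hsδ)⟩

end Aux

/-- the topology generated by `(V,X,d)` is regular (every closed set and
point outside it have disjoint open neighbourhoods) iff for every `x` and every closed
`C`, `⨆_R d(x, B_R(C)) = ⊥` implies `d(x,C) = ⊥`, the supremum ranging over all
functions `R : X → V_≺`, where `B_R(C) = ⋃_{c ∈ C} B_{R(c)}(c)`. -/
theorem regular_iff {V X : Type*} [ValueQuantale V] (d : X → X → V)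
    (hd : IsVSpaceOn (· + · : V → V → V) d) :
    (∀ (C : Set X) (x : X), @IsClosed X (genTop d) C → x ∉ C →
      ∃ U W : Set X, (genTop d).IsOpen U ∧ (genTop d).IsOpen W ∧
        x ∈ U ∧ C ⊆ W ∧ U ∩ W = ∅) ↔
    (∀ (x : X) (C : Set X), @IsClosed X (genTop d) C →
      (⨆ R : X → {v : V // WellAbove v ⊥},
          ⨅ y ∈ ⋃ c ∈ C, ball d (R c).1 c, d x y) = ⊥ →
        (⨅ y ∈ C, d x y) = ⊥) := by
  classical
  have vq := ValueQuantale.isVQ (V := V)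
  constructor
  · -- regularity → condition
    intro hreg x C hC hsup
    by_cases hxC : x ∈ C
    · refine le_antisymm ?_ bot_le
      calc (⨅ y ∈ C, d x y) ≤ d x x := biInf_le _ hxC
        _ = ⊥ := hd.refl x
    · obtain ⟨U, W, hU, hW, hxU, hCW, hUW⟩ := hreg C x hC hxC
      obtain ⟨ε₀, hε₀⟩ := vq.wellAbove_bot_nonempty
      have hWo : GenOpen d W := hW
      choose ε hε1 hε2 using fun c (hc : c ∈ C) => hWo c (hCW hc)
      set R : X → {v : V // WellAbove v ⊥} := fun c =>
        if hc : c ∈ C then ⟨ε c hc, hε1 c hc⟩ else ⟨ε₀, hε₀⟩ with hRdef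
      have hBW : (⋃ c ∈ C, ball d (R c).1 c) ⊆ W := by
        intro y hy
        obtain ⟨c, hc, hyc⟩ := Set.mem_iUnion₂.1 hy
        simp only [hRdef, dif_pos hc] at hyc
        exact hε2 c hc hyc
      have hbot : (⨅ y ∈ ⋃ c ∈ C, ball d (R c).1 c, d x y) = ⊥ :=
        iSup_eq_bot.1 hsup R
      obtain ⟨y, hyB, hyU⟩ := VQ_open_meets d hbot hU hxU
      exact absurd ⟨hyU, hBW hyB⟩ (Set.eq_empty_iff_forall_notMem.1 hUW y)
  · -- condition → regularity
    intro hcond C x hC hxC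
    have hCc : GenOpen d Cᶜ := hC.isOpen_compl
    have hdxC : (⨅ y ∈ C, d x y) ≠ ⊥ := by
      intro h
      obtain ⟨y, hyC, hyCc⟩ := VQ_open_meets d h hCc hxC
      exact hyCc hyC
    have hsup := mt (hcond x C hC) hdxC
    rw [iSup_eq_bot] at hsup
    push_neg at hsup
    obtain ⟨R, hR⟩ := hsup
    set b : V := ⨅ y ∈ ⋃ c ∈ C, ball d (R c).1 c, d x y with hb
    have hε : ∃ ε : V, WellAbove ε ⊥ ∧ ¬ WellAbove ε b := by
      by_contra h
      push_neg at h
      apply hR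
      refine le_antisymm ?_ bot_le
      calc b = sInf {a | WellAbove a b} := vq.raney b
        _ ≤ sInf {a : V | WellAbove a ⊥} := sInf_le_sInf (fun a ha => h a ha)
        _ = ⊥ := (vq.raney ⊥).symm
    obtain ⟨ε, hεbot, hεb⟩ := hε
    refine ⟨ball d ε x, ⋃ c ∈ C, ball d (R c).1 c, ?_, ?_, ?_, ?_, ?_⟩
    · exact VQ_ball_open d hd ε x
    · intro y hy
      obtain ⟨c, hc, hyc⟩ := Set.mem_iUnion₂.1 hy
      obtain ⟨δ, hδ, hball⟩ := VQ_ball_open d hd (R c).1 c y hyc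
      exact ⟨δ, hδ, hball.trans (Set.subset_iUnion₂ (s := fun c _ => ball d (R c).1 c) c hc)⟩
    · exact VQ_mem_ball_self d hd hεbot x
    · intro c hc
      exact Set.mem_iUnion₂.2 ⟨c, hc, VQ_mem_ball_self d hd (R c).2 c⟩
    · ext y
      simp only [Set.mem_inter_iff, Set.mem_empty_iff_false, iff_false, not_and]
      intro hyU hyW
      exact hεb (hyU.anti (biInf_le _ hyW))
end

section
/- Let (V,X,d) be a continuity space that is symmetric, i.e. d(x,y) = d(y,x) for all x, y ∈ X. Then the topology generated by (V,X,d) is completely regular: for every set O open in the generated topology and every x₀ ∈ O there exists a function f : X → [0,1], continuous with respect to the generated topology, such that f(x₀) = 1 and f(y) = 0 for every y outside O; in particular every point and every closed set not containing it are separated by a continuous [0,1]-valued function. -/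
section Aux

variable {V : Type*} [ValueQuantale V]

private lemma vq : IsValueQuantale V (· + ·) := ValueQuantale.isVQ

lemma wellAbove_le {a b : V} (h : WellAbove a b) : b ≤ a := by
  obtain ⟨s, hs, hsa⟩ := h {b} (by simp)
  rw [Set.mem_singleton_iff] at hs
  subst hs; exact hsa

lemma WellAbove.anti_s13 {a b c : V} (h : WellAbove a b) (hc : c ≤ b) : WellAbove a c :=
  fun S hS => h S (le_trans hS hc)

lemma vq_add_le_add_left (c : V) {a b : V} (h : a ≤ b) : c + a ≤ c + b := by
  have h2 : sInf ({a, b} : Set V) = a := by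
    rw [sInf_pair]; exact inf_eq_left.mpr h
  have h1 : c + sInf ({a, b} : Set V) = ⨅ s ∈ ({a, b} : Set V), c + s :=
    vq.add_sInf c {a, b}
  rw [h2] at h1
  rw [h1]
  exact iInf₂_le b (by simp)

lemma vq_add_le_add {a b c e : V} (h1 : a ≤ b) (h2 : c ≤ e) : a + c ≤ b + e :=
  (vq_add_le_add_left a h2).trans
    (by rw [vq.add_comm a e, vq.add_comm b e]; exact vq_add_le_add_left e h1)

lemma vq_le_add_right (a b : V) : a ≤ a + b := by
  conv_lhs => rw [← vq.add_bot a]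
  exact vq_add_le_add_left a bot_le

lemma vq_bot_add (a : V) : ⊥ + a = a := by rw [vq.add_comm]; exact vq.add_bot a

lemma vq_add_left_comm (a b c : V) : a + (b + c) = b + (a + c) := by
  rw [← vq.add_assoc, vq.add_comm a b, vq.add_assoc]

lemma vq_add_add_add_comm (a b c e : V) : (a + b) + (c + e) = (a + c) + (b + e) := by
  rw [vq.add_assoc, vq_add_left_comm b c e, ← vq.add_assoc]

lemma sInf_add_set_le_bot :
    sInf {x : V | ∃ b c, WellAbove b ⊥ ∧ WellAbove c ⊥ ∧ x = b + c} ≤ ⊥ := by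
  set A := {a : V | WellAbove a ⊥} with hA
  have e1 : (⊥ : V) = sInf A := vq.raney ⊥
  have e2 : (⊥ : V) = sInf A + sInf A := by rw [← e1, vq.add_bot]
  have e3 : sInf A + sInf A = ⨅ c ∈ A, (sInf A + c) := vq.add_sInf _ A
  have e4 : ∀ c : V, sInf A + c = ⨅ b ∈ A, (c + b) := fun c => by
    rw [vq.add_comm]; exact vq.add_sInf c A
  have h0 : (⊥ : V) = ⨅ c ∈ A, ⨅ b ∈ A, (c + b) := by
    rw [e2, e3]; simp only [e4]
  calc sInf {x : V | ∃ b c, WellAbove b ⊥ ∧ WellAbove c ⊥ ∧ x = b + c}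
      ≤ ⨅ c ∈ A, ⨅ b ∈ A, (c + b) :=
        le_iInf₂ fun c hc => le_iInf₂ fun b hb => sInf_le ⟨c, b, hc, hb, rfl⟩
    _ = ⊥ := h0.symm

lemma exists_half {ε : V} (hε : WellAbove ε ⊥) :
    ∃ δ : V, WellAbove δ ⊥ ∧ δ + δ ≤ ε := by
  obtain ⟨s, hs, hsε⟩ := hε _ sInf_add_set_le_bot
  obtain ⟨b, c, hb, hc, rfl⟩ := hs
  exact ⟨b ⊓ c, vq.wellAbove_bot_inf b c hb hc,
    (vq_add_le_add inf_le_left inf_le_right).trans hsε⟩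

lemma exists_interp {ε : V} (hε : WellAbove ε ⊥) :
    ∃ γ : V, WellAbove γ ⊥ ∧ WellAbove ε γ := by
  have hS : sInf {b : V | ∃ a, WellAbove a ⊥ ∧ WellAbove b a} ≤ ⊥ := by
    conv_rhs => rw [vq.raney (⊥ : V)]
    refine le_sInf fun a ha => ?_
    calc sInf {b : V | ∃ a, WellAbove a ⊥ ∧ WellAbove b a}
        ≤ sInf {b | WellAbove b a} := sInf_le_sInf fun b hb => ⟨a, ha, hb⟩
      _ = a := (vq.raney a).symm
  obtain ⟨b, ⟨a, ha, hba⟩, hbε⟩ := hε _ hS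
  exact ⟨a, ha, WellAbove.mono hba hbε⟩

lemma exists_seq {γ : V} (hγ : WellAbove γ ⊥) :
    ∃ η : ℕ → V, η 0 = γ ∧ (∀ n, WellAbove (η n) ⊥) ∧
      ∀ n, η (n + 1) + η (n + 1) ≤ η n := by
  let g : ℕ → {v : V // WellAbove v ⊥} := fun n =>
    Nat.rec ⟨γ, hγ⟩
      (fun _ p => ⟨(exists_half p.2).choose, (exists_half p.2).choose_spec.1⟩) n
  exact ⟨fun n => (g n).1, rfl, fun n => (g n).2,
    fun n => (exists_half (g n).2).choose_spec.2⟩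

/-- Radius of the dyadic `k / 2^n`, built from a halving sequence `η`. -/
def dy (η : ℕ → V) : ℕ → ℕ → V
  | 0, k => if k = 0 then ⊥ else η 0
  | n + 1, k => dy η n (k / 2) + (if k % 2 = 1 then η (n + 1) else ⊥)

lemma dy_zero (η : ℕ → V) (n : ℕ) : dy η n 0 = ⊥ := by
  induction n with
  | zero => simp [dy]
  | succ n ih => simp [dy, ih, vq.add_bot]

lemma dy_one (η : ℕ → V) (n : ℕ) : dy η n 1 = η n := by
  cases n with
  | zero => simp [dy]
  | succ n => simp [dy, dy_zero, vq_bot_add]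

lemma dy_double (η : ℕ → V) (n k : ℕ) : dy η (n + 1) (2 * k) = dy η n k := by
  have h1 : 2 * k / 2 = k := by omega
  have h2 : 2 * k % 2 = 0 := by omega
  simp [dy, h1, h2, vq.add_bot]

lemma dy_double' (η : ℕ → V) (n k : ℕ) :
    dy η (n + 1) (2 * k + 1) = dy η n k + η (n + 1) := by
  have h1 : (2 * k + 1) / 2 = k := by omega
  have h2 : (2 * k + 1) % 2 = 1 := by omega
  simp [dy, h1, h2]

lemma dy_pow (η : ℕ → V) (n m k : ℕ) : dy η (n + m) (k * 2 ^ m) = dy η n k := by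
  induction m with
  | zero => simp
  | succ m ih =>
      have h : k * 2 ^ (m + 1) = 2 * (k * 2 ^ m) := by ring
      rw [h, show n + (m + 1) = (n + m) + 1 from rfl, dy_double, ih]

lemma dy_add (η : ℕ → V) (hsum : ∀ n, η (n + 1) + η (n + 1) ≤ η n) :
    ∀ N a b : ℕ, a + b ≤ 2 ^ N → dy η N a + dy η N b ≤ dy η N (a + b) := by
  intro N
  induction N with
  | zero =>
      intro a b hab
      rcases (by omega : a = 0 ∨ b = 0) with rfl | rfl
      · rw [dy_zero, vq_bot_add, Nat.zero_add]
      · rw [dy_zero, vq.add_bot, Nat.add_zero]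
  | succ N ih =>
      intro a b hab
      obtain ⟨a', (rfl | rfl)⟩ : ∃ a', a = 2 * a' ∨ a = 2 * a' + 1 := ⟨a / 2, by omega⟩ <;>
        obtain ⟨b', (rfl | rfl)⟩ : ∃ b', b = 2 * b' ∨ b = 2 * b' + 1 := ⟨b / 2, by omega⟩
      · rw [show 2 * a' + 2 * b' = 2 * (a' + b') from by ring, dy_double, dy_double, dy_double]
        exact ih a' b' (by omega)
      · rw [show 2 * a' + (2 * b' + 1) = 2 * (a' + b') + 1 from by ring,
          dy_double, dy_double', dy_double', ← vq.add_assoc]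
        exact vq_add_le_add (ih a' b' (by omega)) le_rfl
      · rw [show 2 * a' + 1 + 2 * b' = 2 * (a' + b') + 1 from by ring,
          dy_double, dy_double', dy_double']
        rw [vq.add_assoc, vq.add_comm (η (N + 1)), ← vq.add_assoc]
        exact vq_add_le_add (ih a' b' (by omega)) le_rfl
      · rw [show 2 * a' + 1 + (2 * b' + 1) = 2 * (a' + b' + 1) from by ring,
          dy_double, dy_double', dy_double', vq_add_add_add_comm]
        calc dy η N a' + dy η N b' + (η (N + 1) + η (N + 1))
            ≤ dy η N (a' + b') + η N := vq_add_le_add (ih a' b' (by omega)) (hsum N)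
          _ = dy η N (a' + b') + dy η N 1 := by rw [dy_one]
          _ ≤ dy η N (a' + b' + 1) := ih (a' + b') 1 (by omega)

lemma dy_mono (η : ℕ → V) (hsum : ∀ n, η (n + 1) + η (n + 1) ≤ η n)
    {n k k' : ℕ} (h : k ≤ k') (h' : k' ≤ 2 ^ n) : dy η n k ≤ dy η n k' := by
  calc dy η n k ≤ dy η n k + dy η n (k' - k) := vq_le_add_right _ _
    _ ≤ dy η n (k + (k' - k)) := dy_add η hsum n k (k' - k) (by omega)
    _ = dy η n k' := by rw [show k + (k' - k) = k' from by omega]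

lemma dy_top (η : ℕ → V) (n : ℕ) : dy η n (2 ^ n) = η 0 := by
  induction n with
  | zero => simp [dy]
  | succ n ih => rw [show (2 : ℕ) ^ (n + 1) = 2 * 2 ^ n from by ring, dy_double, ih]

lemma dy_le_top (η : ℕ → V) (hsum : ∀ n, η (n + 1) + η (n + 1) ≤ η n)
    {n k : ℕ} (hk : k ≤ 2 ^ n) : dy η n k ≤ η 0 := by
  rw [← dy_top η n]; exact dy_mono η hsum hk le_rfl

end Aux

/-- a symmetric continuity space generates a completely regular topology:
for every generated-open `O` and `x₀ ∈ O` there is a `[0,1]`-valued function `f`,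
continuous for the generated topology, with `f x₀ = 1` and `f = 0` outside `O`. -/
theorem symmetric_completelyRegular {V X : Type*} [ValueQuantale V] (d : X → X → V)
    (hd : IsVSpaceOn (· + · : V → V → V) d) (hsym : ∀ x y, d x y = d y x) :
    ∀ O : Set X, (genTop d).IsOpen O → ∀ x₀ ∈ O,
      ∃ f : X → ℝ, @Continuous X ℝ (genTop d) _ f ∧
        (∀ x, f x ∈ Set.Icc (0 : ℝ) 1) ∧ f x₀ = 1 ∧ ∀ y ∉ O, f y = 0 := by
  intro O hO x₀ hx₀
  obtain ⟨ε, hε, hball⟩ := hO x₀ hx₀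
  obtain ⟨γ, hγ, hγε⟩ := exists_interp hε
  obtain ⟨η, hη0, hηwa, hηsum⟩ := exists_seq hγ
  set A : X → Set ℝ := fun x =>
    {q | ∃ n k : ℕ, 1 ≤ k ∧ k ≤ 2 ^ n ∧ q = (k : ℝ) / 2 ^ n ∧ d x₀ x ≤ dy η n k}
    with hAdef
  set ρ : X → ℝ := fun x => sInf (insert 1 (A x)) with hρdef
  have hAq : ∀ x q, q ∈ A x → 0 ≤ q := by
    rintro x q ⟨n, k, hk1, hk2, rfl, hdk⟩
    positivity
  have hbdd : ∀ x, BddBelow (insert (1 : ℝ) (A x)) := by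
    intro x
    refine ⟨0, ?_⟩
    rintro q hq
    rcases Set.mem_insert_iff.1 hq with rfl | hq
    · norm_num
    · exact hAq x q hq
  have hρ_le_one : ∀ x, ρ x ≤ 1 := fun x => csInf_le (hbdd x) (Set.mem_insert _ _)
  have hρ_nonneg : ∀ x, 0 ≤ ρ x := by
    intro x
    refine le_csInf ⟨1, Set.mem_insert _ _⟩ ?_
    rintro q hq
    rcases Set.mem_insert_iff.1 hq with rfl | hq
    · norm_num
    · exact hAq x q hq
  have hmem : ∀ x q, q ∈ A x → ρ x ≤ q := fun x q hq =>
    csInf_le (hbdd x) (Set.mem_insert_of_mem _ hq)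
  have hlip : ∀ (n : ℕ) (x y : X), d x y ≤ η n → ρ y ≤ ρ x + 1 / 2 ^ n := by
    intro n x y hdxy
    have h1 : ∀ q ∈ insert (1 : ℝ) (A x), ρ y - 1 / 2 ^ n ≤ q := by
      rintro q hq
      rcases Set.mem_insert_iff.1 hq with rfl | hq
      · have : (0 : ℝ) < 1 / 2 ^ n := by positivity
        linarith [hρ_le_one y]
      · obtain ⟨m, k, hk1, hk2, rfl, hdk⟩ := hq
        set N := max m n with hN
        have hmN : m ≤ N := le_max_left _ _
        have hnN : n ≤ N := le_max_right _ _
        have e1 : dy η N (k * 2 ^ (N - m)) = dy η m k := by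
          have h := dy_pow η m (N - m) k
          rwa [show m + (N - m) = N from by omega] at h
        have e2 : dy η N (2 ^ (N - n)) = η n := by
          have h := dy_pow η n (N - n) 1
          rw [one_mul, show n + (N - n) = N from by omega, dy_one] at h
          exact h
        have hdy : d x₀ y ≤ dy η N (k * 2 ^ (N - m)) + dy η N (2 ^ (N - n)) := by
          calc d x₀ y ≤ d x₀ x + d x y := hd.triangle x₀ x y
            _ ≤ dy η m k + η n := vq_add_le_add hdk hdxy
            _ = _ := by rw [e1, e2]
        have harith : ((k * 2 ^ (N - m) + 2 ^ (N - n) : ℕ) : ℝ) / 2 ^ N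
            = (k : ℝ) / 2 ^ m + 1 / 2 ^ n := by
          have h2m : (2 : ℝ) ^ (N - m) * 2 ^ m = 2 ^ N := by
            rw [← pow_add]; congr 1; omega
          have h2n : (2 : ℝ) ^ (N - n) * 2 ^ n = 2 ^ N := by
            rw [← pow_add]; congr 1; omega
          have hm0 : (2 : ℝ) ^ m ≠ 0 := by positivity
          have hn0 : (2 : ℝ) ^ n ≠ 0 := by positivity
          have hN0 : (2 : ℝ) ^ N ≠ 0 := by positivity
          push_cast
          field_simp
          linear_combination ((k : ℝ) * 2 ^ n) * h2m + ((2 : ℝ) ^ m) * h2n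
        by_cases hcase : k * 2 ^ (N - m) + 2 ^ (N - n) ≤ 2 ^ N
        · have hq' : ((k * 2 ^ (N - m) + 2 ^ (N - n) : ℕ) : ℝ) / 2 ^ N ∈ A y := by
            refine ⟨N, k * 2 ^ (N - m) + 2 ^ (N - n), ?_, hcase, rfl, ?_⟩
            · have := Nat.one_le_two_pow (n := N - n); omega
            · exact hdy.trans (dy_add η hηsum N _ _ hcase)
          have hle := hmem y _ hq'
          rw [harith] at hle
          linarith
        · have hgt : (1 : ℝ) < (k : ℝ) / 2 ^ m + 1 / 2 ^ n := by
            rw [← harith]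
            have hlt : (2 : ℕ) ^ N < k * 2 ^ (N - m) + 2 ^ (N - n) := by omega
            have hcast : ((2 : ℕ) ^ N : ℝ) < ((k * 2 ^ (N - m) + 2 ^ (N - n) : ℕ) : ℝ) := by
              exact_mod_cast hlt
            have hN0 : (0 : ℝ) < 2 ^ N := by positivity
            rw [lt_div_iff₀ hN0, one_mul]
            push_cast at hcast ⊢
            linarith
          linarith [hρ_le_one y]
    have h2 : ρ y - 1 / 2 ^ n ≤ ρ x := le_csInf ⟨1, Set.mem_insert _ _⟩ h1
    linarith
  refine ⟨fun x => 1 - ρ x, ?_, ?_, ?_, ?_⟩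
  · rw [continuous_def]
    intro U hU
    show GenOpen d ((fun x => 1 - ρ x) ⁻¹' U)
    intro x hx
    obtain ⟨δ, hδ, hballU⟩ := Metric.isOpen_iff.1 hU _ hx
    obtain ⟨n, hn⟩ := exists_pow_lt_of_lt_one hδ (by norm_num : (1 : ℝ) / 2 < 1)
    rw [div_pow, one_pow] at hn
    refine ⟨η n, hηwa n, ?_⟩
    intro y hy
    have h1 : d x y ≤ η n := wellAbove_le hy
    have h2 : d y x ≤ η n := by rw [hsym y x]; exact h1
    have l1 := hlip n x y h1
    have l2 := hlip n y x h2
    apply hballU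
    rw [Metric.mem_ball, Real.dist_eq]
    have habs : |1 - ρ y - (1 - ρ x)| ≤ 1 / 2 ^ n :=
      abs_le.2 ⟨by linarith, by linarith⟩
    linarith
  · intro x
    show 1 - ρ x ∈ Set.Icc (0 : ℝ) 1
    rw [Set.mem_Icc]
    exact ⟨by linarith [hρ_le_one x], by linarith [hρ_nonneg x]⟩
  · have h0 : ρ x₀ ≤ 0 := by
      by_contra h
      push_neg at h
      obtain ⟨n, hn⟩ := exists_pow_lt_of_lt_one h (by norm_num : (1 : ℝ) / 2 < 1)
      rw [div_pow, one_pow] at hn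
      have hmem0 : (1 : ℝ) / 2 ^ n ∈ A x₀ := by
        refine ⟨n, 1, le_rfl, Nat.one_le_two_pow, by norm_num, ?_⟩
        rw [hd.refl x₀]; exact bot_le
      have := hmem x₀ _ hmem0
      linarith
    have h1 : ρ x₀ = 0 := le_antisymm h0 (hρ_nonneg x₀)
    show 1 - ρ x₀ = 1
    rw [h1]; ring
  · intro y hy
    have hA_empty : A y = ∅ := by
      ext q
      simp only [Set.mem_empty_iff_false, iff_false]
      rintro ⟨n, k, hk1, hk2, rfl, hdk⟩
      apply hy
      apply hball
      have hle : d x₀ y ≤ γ := hdk.trans (hη0 ▸ dy_le_top η hηsum hk2)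
      exact WellAbove.anti_s13 hγε hle
    have h1 : ρ y = 1 := by
      have : insert (1 : ℝ) (A y) = {1} := by rw [hA_empty]; simp
      rw [hρdef]
      simp only [this]
      exact csInf_singleton 1
    show 1 - ρ y = 0
    rw [h1]; ring
end
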